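/- Let F = {(x - a_i)^{e_i} : 1 ≤ i ≤ s} be a family of pairwise distinct shifted powers with a_i ∈ ℂ and e_i ≥ s(s-1)/2 for all i. Then the elements of F are linearly independent over ℂ. -/

import Mathlib

open Polynomial

namespace Stmt8Aux

open Matrix Finset

noncomputable section

/-- The Wronskian-style matrix of the family of shifted powers: row `j` holds
the `j`-th derivatives. -/
def Wm (k : ℕ) (a : Fin k → ℂ) (e : Fin k → ℕ) : Matrix (Fin k) (Fin k) ℂ[X] :=
  Matrix.of fun j i => derivative^[(j : ℕ)] ((X - C (a i)) ^ (e i))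

/-- sub-Wronskian deleting index `i` (and the top derivative row). -/
def subW (n : ℕ) (a : Fin (n + 1) → ℂ) (e : Fin (n + 1) → ℕ) (i : Fin (n + 1)) : ℂ[X] :=
  (Wm n (a ∘ i.succAbove) (e ∘ i.succAbove)).det

/-- signed cofactors -/
def pvec (n : ℕ) (a : Fin (n + 1) → ℂ) (e : Fin (n + 1) → ℕ) (i : Fin (n + 1)) : ℂ[X] :=
  (-1 : ℂ[X]) ^ (n + (i : ℕ)) * subW n a e i

/-- the first `n` rows of `Wm (n+1) a e` -/
def Urow (n : ℕ) (a : Fin (n + 1) → ℂ) (e : Fin (n + 1) → ℕ) :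
    Fin n → Fin (n + 1) → ℂ[X] :=
  fun m i => Wm (n + 1) a e (Fin.castSucc m) i

lemma det_snoc {n : ℕ} (U : Fin n → Fin (n + 1) → ℂ[X]) (r : Fin (n + 1) → ℂ[X]) :
    (Matrix.of (Fin.snoc U r)).det
      = ∑ i : Fin (n + 1), (-1) ^ (n + (i : ℕ)) * r i *
          (Matrix.of fun (m i' : Fin n) => U m (i.succAbove i')).det := by
  rw [Matrix.det_succ_row _ (Fin.last n)]
  refine Finset.sum_congr rfl fun i _ => ?_
  have h1 : (Matrix.of (Fin.snoc U r)) (Fin.last n) i = r i := by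
    simp [Fin.snoc_last]
  have h2 : (Matrix.of (Fin.snoc U r)).submatrix (Fin.last n).succAbove i.succAbove
      = Matrix.of fun (m i' : Fin n) => U m (i.succAbove i') := by
    funext m i'
    simp [Fin.succAbove_last, Fin.snoc_castSucc]
  rw [h1, h2]
  simp [Fin.val_last]

/-- Laplace expansion along the last row for `snoc` matrices built on `Urow`. -/
lemma lap_snoc (n : ℕ) (a : Fin (n + 1) → ℂ) (e : Fin (n + 1) → ℕ)
    (r : Fin (n + 1) → ℂ[X]) :
    (Matrix.of (Fin.snoc (Urow n a e) r)).det
      = ∑ i : Fin (n + 1), (-1) ^ (n + (i : ℕ)) * r i * subW n a e i := by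
  rw [det_snoc]
  refine Finset.sum_congr rfl fun i _ => ?_
  have hEq : (Matrix.of fun (m i' : Fin n) => Urow n a e m (i.succAbove i'))
      = Wm n (a ∘ i.succAbove) (e ∘ i.succAbove) := by
    funext m i'
    show Wm (n + 1) a e (Fin.castSucc m) (i.succAbove i') = _
    simp [Wm, Fin.coe_castSucc]
  rw [hEq]
  rfl

lemma natDegree_det_le {k : ℕ} (M : Matrix (Fin k) (Fin k) ℂ[X]) (b : Fin k → ℕ)
    (hb : ∀ m i, (M m i).natDegree ≤ b m) : M.det.natDegree ≤ ∑ m, b m := by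
  rw [Matrix.det_apply']
  refine Polynomial.natDegree_sum_le_of_forall_le _ _ fun σ _ => ?_
  refine (Polynomial.natDegree_mul_le).trans ?_
  rw [Polynomial.natDegree_intCast, zero_add]
  refine (Polynomial.natDegree_prod_le _ _).trans ?_
  calc ∑ i, (M (σ i) i).natDegree ≤ ∑ i, b (σ i) := Finset.sum_le_sum fun i _ => hb _ i
    _ = ∑ m, b m := Equiv.sum_comp σ b

lemma sum_rev (k : ℕ) : (∑ m : Fin k, ((k - 1) - (m : ℕ))) = k.choose 2 := by
  rw [Fin.sum_univ_eq_sum_range (fun j => (k - 1) - j) k,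
    Finset.sum_range_reflect (fun j => j) k, Nat.choose_two_right]
  exact Finset.sum_range_id k

lemma rm_prod {ι : Type*} (s : Finset ι) (g : ι → ℂ[X]) (hg : ∀ i ∈ s, g i ≠ 0) (x : ℂ) :
    Polynomial.rootMultiplicity x (∏ i ∈ s, g i)
      = ∑ i ∈ s, Polynomial.rootMultiplicity x (g i) := by
  classical
  induction s using Finset.induction_on with
  | empty =>
      simp only [Finset.prod_empty, Finset.sum_empty]
      exact Polynomial.rootMultiplicity_eq_zero (by simp [Polynomial.IsRoot])
  | @insert i s hi ih =>
      have h1 : g i ≠ 0 := hg i (Finset.mem_insert_self i s)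
      have h2 : ∀ j ∈ s, g j ≠ 0 := fun j hj => hg j (Finset.mem_insert_of_mem hj)
      have hprod : (∏ j ∈ s, g j) ≠ 0 := Finset.prod_ne_zero_iff.mpr h2
      rw [Finset.prod_insert hi, Polynomial.rootMultiplicity_mul (mul_ne_zero h1 hprod),
        ih h2, Finset.sum_insert hi]

lemma rm_pow (x b : ℂ) (E : ℕ) :
    Polynomial.rootMultiplicity x ((X - C b) ^ E) = if b = x then E else 0 := by
  split_ifs with h
  · subst h
    exact Polynomial.rootMultiplicity_X_sub_C_pow b E
  · refine Polynomial.rootMultiplicity_eq_zero ?_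
    simp only [Polynomial.IsRoot, Polynomial.eval_pow, Polynomial.eval_sub, Polynomial.eval_X,
      Polynomial.eval_C]
    exact pow_ne_zero _ (sub_ne_zero.mpr fun hh => h hh.symm)

lemma rm_le_natDegree {p : ℂ[X]} (hp : p ≠ 0) (x : ℂ) :
    Polynomial.rootMultiplicity x p ≤ p.natDegree := by
  have := Polynomial.natDegree_le_of_dvd (Polynomial.pow_rootMultiplicity_dvd p x) hp
  simpa [(Polynomial.monic_X_sub_C x).natDegree_pow, Polynomial.natDegree_X_sub_C] using this

lemma natDegree_X_sub_C_pow (b : ℂ) (d : ℕ) : ((X - C b) ^ d).natDegree = d := by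
  rw [(Polynomial.monic_X_sub_C b).natDegree_pow, Polynomial.natDegree_X_sub_C, mul_one]

/-- degree equality for polynomials with vanishing Wronskian -/
lemma deg_eq {p q : ℂ[X]} (hp' : derivative p ≠ 0) (hq' : derivative q ≠ 0)
    (hh : p * derivative q = derivative p * q) : q.natDegree = p.natDegree := by
  have hp0 : p ≠ 0 := fun h0 => hp' (by simp [h0])
  have hq0 : q ≠ 0 := fun h0 => hq' (by simp [h0])
  have hn : p.natDegree ≠ 0 := by
    intro h0
    obtain ⟨c, hc⟩ := Polynomial.natDegree_eq_zero.mp h0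
    rw [← hc] at hp'
    simp at hp'
  have hm : q.natDegree ≠ 0 := by
    intro h0
    obtain ⟨c, hc⟩ := Polynomial.natDegree_eq_zero.mp h0
    rw [← hc] at hq'
    simp at hq'
  have cder : ∀ r : ℂ[X], r.natDegree ≠ 0 →
      (derivative r).coeff (r.natDegree - 1) = r.leadingCoeff * r.natDegree := by
    intro r hr
    have e1 : r.natDegree - 1 + 1 = r.natDegree := Nat.succ_pred_eq_of_pos (Nat.pos_of_ne_zero hr)
    have h2 := Polynomial.coeff_derivative r (r.natDegree - 1)
    rw [e1] at h2
    rw [h2, Polynomial.leadingCoeff]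
    congr 1
    rw [← Nat.cast_succ, Nat.succ_eq_add_one, e1]
  have dnat : ∀ r : ℂ[X], r.natDegree ≠ 0 → (derivative r).natDegree = r.natDegree - 1 := by
    intro r hr
    have hr0 : r ≠ 0 := fun h0 => hr (by simp [h0])
    refine le_antisymm (Polynomial.natDegree_derivative_le r) (Polynomial.le_natDegree_of_ne_zero ?_)
    rw [cder r hr]
    exact mul_ne_zero (Polynomial.leadingCoeff_ne_zero.mpr hr0) (Nat.cast_ne_zero.mpr hr)
  have key := congrArg (fun r : ℂ[X] => r.coeff (p.natDegree + (q.natDegree - 1))) hh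
  have L : (p * derivative q).coeff (p.natDegree + (q.natDegree - 1))
      = p.leadingCoeff * (derivative q).leadingCoeff := by
    have h3 := Polynomial.coeff_mul_degree_add_degree p (derivative q)
    rwa [dnat q hm] at h3
  have R : (derivative p * q).coeff (p.natDegree + (q.natDegree - 1))
      = (derivative p).leadingCoeff * q.leadingCoeff := by
    have e2 : p.natDegree + (q.natDegree - 1) = (derivative p).natDegree + q.natDegree := by
      rw [dnat p hn]
      omega
    rw [e2]
    exact Polynomial.coeff_mul_degree_add_degree _ _
  have lq : (derivative q).leadingCoeff = q.leadingCoeff * q.natDegree := by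
    rw [Polynomial.leadingCoeff, dnat q hm, cder q hm]
  have lp : (derivative p).leadingCoeff = p.leadingCoeff * p.natDegree := by
    rw [Polynomial.leadingCoeff, dnat p hn, cder p hn]
  rw [L, R, lq, lp] at key
  have hpl : p.leadingCoeff ≠ 0 := Polynomial.leadingCoeff_ne_zero.mpr hp0
  have hql : q.leadingCoeff ≠ 0 := Polynomial.leadingCoeff_ne_zero.mpr hq0
  have h4 : p.leadingCoeff * q.leadingCoeff * (q.natDegree : ℂ)
      = p.leadingCoeff * q.leadingCoeff * (p.natDegree : ℂ) := by linear_combination key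
  have h5 : (q.natDegree : ℂ) = (p.natDegree : ℂ) := mul_left_cancel₀ (mul_ne_zero hpl hql) h4
  exact_mod_cast h5

/-- Two nonzero polynomials with vanishing Wronskian are proportional. -/
lemma ratio_const {p q : ℂ[X]} (hp : p ≠ 0) (hq : q ≠ 0)
    (h : p * derivative q = derivative p * q) : ∃ c : ℂ, c ≠ 0 ∧ q = C c * p := by
  by_cases hp' : derivative p = 0
  · have hq' : derivative q = 0 := by
      have h1 : p * derivative q = 0 := by rw [h, hp', zero_mul]
      exact (mul_eq_zero.mp h1).resolve_left hp
    obtain ⟨cp, hcp⟩ := Polynomial.natDegree_eq_zero.mp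
      (Polynomial.natDegree_eq_zero_of_derivative_eq_zero hp')
    obtain ⟨cq, hcq⟩ := Polynomial.natDegree_eq_zero.mp
      (Polynomial.natDegree_eq_zero_of_derivative_eq_zero hq')
    have hcp0 : cp ≠ 0 := fun h0 => hp (by rw [← hcp, h0, map_zero])
    have hcq0 : cq ≠ 0 := fun h0 => hq (by rw [← hcq, h0, map_zero])
    refine ⟨cq / cp, div_ne_zero hcq0 hcp0, ?_⟩
    rw [← hcp, ← hcq, ← Polynomial.C_mul, div_mul_cancel₀ _ hcp0]
  · by_cases hq' : derivative q = 0
    · exfalso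
      have h1 : derivative p * q = 0 := by rw [← h, hq', mul_zero]
      exact hp' ((mul_eq_zero.mp h1).resolve_right hq)
    · have hdeg := deg_eq hp' hq' h
      set r : ℂ[X] := C q.leadingCoeff * p - C p.leadingCoeff * q with hrdef
      have hwr : p * derivative r = derivative p * r := by
        have hdr : derivative r = C q.leadingCoeff * derivative p
            - C p.leadingCoeff * derivative q := by
          rw [hrdef]
          simp [Polynomial.derivative_sub, Polynomial.derivative_C_mul]
        rw [hdr, hrdef]
        linear_combination (-(C p.leadingCoeff)) * h
      by_cases hr0 : r = 0
      · have heq : C q.leadingCoeff * p = C p.leadingCoeff * q := by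
          have := sub_eq_zero.mp (hrdef ▸ hr0)
          exact this
        have hpl : p.leadingCoeff ≠ 0 := Polynomial.leadingCoeff_ne_zero.mpr hp
        have hql : q.leadingCoeff ≠ 0 := Polynomial.leadingCoeff_ne_zero.mpr hq
        refine ⟨q.leadingCoeff / p.leadingCoeff, div_ne_zero hql hpl, ?_⟩
        apply mul_left_cancel₀ (show (C p.leadingCoeff : ℂ[X]) ≠ 0 from by simpa using hpl)
        rw [← heq, ← mul_assoc, ← Polynomial.C_mul, mul_comm p.leadingCoeff,
          div_mul_cancel₀ _ hpl]
      · exfalso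
        by_cases hr' : derivative r = 0
        · have h1 : derivative p * r = 0 := by rw [← hwr, hr', mul_zero]
          exact hr0 ((mul_eq_zero.mp h1).resolve_left hp')
        · have hdr := deg_eq hp' hr' hwr
          have hle : r.natDegree ≤ p.natDegree := by
            refine le_trans (Polynomial.natDegree_sub_le _ _) ?_
            refine max_le ((Polynomial.natDegree_C_mul_le _ _).trans le_rfl)
              ((Polynomial.natDegree_C_mul_le _ _).trans hdeg.le)
          have hcoeff : r.coeff p.natDegree = 0 := by
            rw [hrdef]
            simp only [Polynomial.coeff_sub, Polynomial.coeff_C_mul]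
            rw [show q.coeff p.natDegree = q.leadingCoeff from by
              rw [Polynomial.leadingCoeff, hdeg]]
            rw [show p.coeff p.natDegree = p.leadingCoeff from rfl]
            ring
          have hlt : r.natDegree < p.natDegree := by
            rcases lt_or_eq_of_le hle with h1 | h1
            · exact h1
            · exfalso
              have := Polynomial.leadingCoeff_ne_zero.mpr hr0
              rw [Polynomial.leadingCoeff, h1] at this
              exact this hcoeff
          omega

set_option maxHeartbeats 1000000 in
theorem key (n : ℕ) : ∀ (a : Fin n → ℂ) (e : Fin n → ℕ),
    (Function.Injective fun i => (a i, e i)) → (∀ i, n.choose 2 ≤ e i) →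
    (Wm n a e).det ≠ 0 := by
  induction n with
  | zero =>
      intro a e _ _
      rw [Matrix.det_fin_zero]
      exact one_ne_zero
  | succ n IH =>
      intro a e hinj hbig hdet
      -- nonvanishing of the sub-Wronskians, from the induction hypothesis
      have hsw : ∀ i, subW n a e i ≠ 0 := by
        intro i
        refine IH (a ∘ i.succAbove) (e ∘ i.succAbove)
          (hinj.comp Fin.succAbove_right_injective) ?_
        intro i'
        exact le_trans (Nat.choose_le_choose 2 (Nat.le_succ n)) (hbig _)
      have hp0 : ∀ i, pvec n a e i ≠ 0 := fun i =>
        mul_ne_zero (pow_ne_zero _ (by norm_num)) (hsw i)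
      -- Identity 1 : the cofactor vector annihilates every row
      have id1 : ∀ j : Fin (n + 1), ∑ i, pvec n a e i * Wm (n + 1) a e j i = 0 := by
        intro j
        have hB : (Matrix.of (Fin.snoc (Urow n a e) (fun i => Wm (n + 1) a e j i))).det = 0 := by
          induction j using Fin.lastCases with
          | last =>
              have hEq : (Matrix.of (Fin.snoc (Urow n a e)
                  (fun i => Wm (n + 1) a e (Fin.last n) i))) = Wm (n + 1) a e := by
                funext rr i
                refine Fin.lastCases ?_ ?_ rr
                · simp [Fin.snoc_last]
                · intro m
                  simp [Fin.snoc_castSucc, Urow]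
              rw [hEq]
              exact hdet
          | cast m =>
              refine Matrix.det_zero_of_row_eq (i := Fin.castSucc m) (j := Fin.last n)
                (Fin.castSucc_lt_last m).ne ?_
              funext i
              simp [Fin.snoc_castSucc, Fin.snoc_last, Urow]
        rw [lap_snoc] at hB
        calc ∑ i, pvec n a e i * Wm (n + 1) a e j i
            = ∑ i : Fin (n + 1), (-1) ^ (n + (i : ℕ)) * Wm (n + 1) a e j i * subW n a e i :=
              Finset.sum_congr rfl fun i _ => by unfold pvec; ring
          _ = 0 := hB
      -- Identity 2 : the derivative of the cofactor vector annihilates the first n rows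
      have id2 : ∀ m : Fin n,
          ∑ i, derivative (pvec n a e i) * Wm (n + 1) a e (Fin.castSucc m) i = 0 := by
        intro m
        have h1 := congrArg derivative (id1 (Fin.castSucc m))
        rw [Polynomial.derivative_sum] at h1
        simp only [Polynomial.derivative_mul, Polynomial.derivative_zero] at h1
        rw [Finset.sum_add_distrib] at h1
        have h2 : ∀ i, derivative (Wm (n + 1) a e (Fin.castSucc m) i)
            = Wm (n + 1) a e m.succ i := by
          intro i
          show derivative (derivative^[((Fin.castSucc m : Fin (n+1)) : ℕ)] ((X - C (a i)) ^ (e i)))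
            = derivative^[((m.succ : Fin (n+1)) : ℕ)] ((X - C (a i)) ^ (e i))
          have hv : ((m.succ : Fin (n+1)) : ℕ) = ((Fin.castSucc m : Fin (n+1)) : ℕ) + 1 := by
            simp [Fin.val_succ, Fin.coe_castSucc]
          rw [hv, Function.iterate_succ_apply']
        have h3 := id1 m.succ
        simp only [h2] at h1
        rwa [h3, add_zero] at h1
      -- Identity 3 : proportionality of cofactors and their derivatives, via the adjugate
      have id3 : ∀ i, pvec n a e 0 * derivative (pvec n a e i)
          = derivative (pvec n a e 0) * pvec n a e i := by
        have r0 : Fin (n + 1) → ℂ[X] := fun i => if i = 0 then 1 else 0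
        set M0 : Matrix (Fin (n + 1)) (Fin (n + 1)) ℂ[X] :=
          Matrix.of (Fin.snoc (Urow n a e) (fun i => if i = 0 then (1:ℂ[X]) else 0)) with hM0
        have hdet0 : M0.det = pvec n a e 0 := by
          rw [hM0, lap_snoc]
          rw [Finset.sum_eq_single (0 : Fin (n + 1))]
          · simp [pvec]
          · intro b _ hb
            simp [hb]
          · simp
        have hmv : M0 *ᵥ (fun i => derivative (pvec n a e i))
            = fun rr => if rr = Fin.last n then derivative (pvec n a e 0) else 0 := by
          funext rr
          refine Fin.lastCases ?_ ?_ rr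
          · show ∑ i, M0 (Fin.last n) i * derivative (pvec n a e i) = _
            rw [if_pos rfl]
            have hrow : ∀ i, M0 (Fin.last n) i * derivative (pvec n a e i)
                = (if i = (0 : Fin (n+1)) then derivative (pvec n a e 0) else 0) := by
              intro i
              have h9 : M0 (Fin.last n) i = if i = 0 then 1 else 0 := by
                simp [hM0, Fin.snoc_last]
              rw [h9]
              split_ifs with h
              · subst h; rw [one_mul]
              · rw [zero_mul]
            calc ∑ i, M0 (Fin.last n) i * derivative (pvec n a e i)
                = ∑ i, (if i = (0 : Fin (n+1)) then derivative (pvec n a e 0) else 0) :=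
                  Finset.sum_congr rfl fun i _ => hrow i
              _ = derivative (pvec n a e 0) := by simp
          · intro m
            show ∑ i, M0 (Fin.castSucc m) i * derivative (pvec n a e i) = _
            rw [if_neg (Fin.castSucc_lt_last m).ne]
            have hrow : ∀ i, M0 (Fin.castSucc m) i = Wm (n + 1) a e (Fin.castSucc m) i := by
              intro i
              simp [hM0, Fin.snoc_castSucc, Urow]
            calc ∑ i, M0 (Fin.castSucc m) i * derivative (pvec n a e i)
                = ∑ i, derivative (pvec n a e i) * Wm (n + 1) a e (Fin.castSucc m) i :=
                  Finset.sum_congr rfl fun i _ => by rw [hrow i]; ring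
              _ = 0 := id2 m
        have hadj : ∀ i, (Matrix.adjugate M0) i (Fin.last n) = pvec n a e i := by
          intro i
          rw [Matrix.adjugate_apply]
          have hupd : M0.updateRow (Fin.last n) (Pi.single i 1)
              = Matrix.of (Fin.snoc (Urow n a e) (Pi.single i 1)) := by
            funext rr i'
            refine Fin.lastCases ?_ ?_ rr
            · simp [Matrix.updateRow_self, Fin.snoc_last]
            · intro m
              rw [Matrix.updateRow_ne (Fin.castSucc_lt_last m).ne]
              simp [hM0, Fin.snoc_castSucc]
          rw [hupd, lap_snoc]
          rw [Finset.sum_eq_single i]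
          · simp [pvec, Pi.single_eq_same]
          · intro b _ hb
            simp [Pi.single_eq_of_ne hb]
          · simp
        have hass : M0.det • (fun i => derivative (pvec n a e i))
            = fun i => pvec n a e i * derivative (pvec n a e 0) := by
          calc M0.det • (fun i => derivative (pvec n a e i))
              = (M0.det • (1 : Matrix (Fin (n+1)) (Fin (n+1)) ℂ[X])) *ᵥ
                  (fun i => derivative (pvec n a e i)) := by
                rw [Matrix.smul_mulVec, Matrix.one_mulVec]
            _ = (Matrix.adjugate M0 * M0) *ᵥ (fun i => derivative (pvec n a e i)) := by
                rw [Matrix.adjugate_mul]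
            _ = Matrix.adjugate M0 *ᵥ (M0 *ᵥ (fun i => derivative (pvec n a e i))) := by
                rw [← Matrix.mulVec_mulVec]
            _ = fun i => pvec n a e i * derivative (pvec n a e 0) := by
                rw [hmv]
                funext i
                show ∑ rr, Matrix.adjugate M0 i rr * _ = _
                rw [Finset.sum_eq_single (Fin.last n)]
                · rw [if_pos rfl, hadj]
                · intro b _ hb
                  rw [if_neg hb, mul_zero]
                · simp
        intro i
        have h6 := congrFun hass i
        simp only [Pi.smul_apply, smul_eq_mul, hdet0] at h6
        rw [h6]
        ring
      -- extract a ℂ-linear relation with nonzero coefficients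
      have hratio : ∀ i, ∃ c : ℂ, c ≠ 0 ∧ pvec n a e i = C c * pvec n a e 0 :=
        fun i => ratio_const (hp0 0) (hp0 i) (id3 i)
      choose c hc0 hcp using hratio
      have hrel : ∑ i, C (c i) * ((X - C (a i)) ^ (e i)) = 0 := by
        have h0 := id1 0
        have hA0 : ∀ i, Wm (n + 1) a e 0 i = (X - C (a i)) ^ (e i) := by
          intro i
          show derivative^[((0 : Fin (n+1)) : ℕ)] _ = _
          simp
        have h7 : ∑ i, pvec n a e i * Wm (n + 1) a e 0 i
            = pvec n a e 0 * ∑ i, C (c i) * ((X - C (a i)) ^ (e i)) := by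
          rw [Finset.mul_sum]
          refine Finset.sum_congr rfl fun i _ => ?_
          rw [hA0, hcp i]
          ring
        rw [h7] at h0
        exact (mul_eq_zero.mp h0).resolve_left (hp0 0)
      -- case analysis on the shifts
      by_cases hsh : ∀ i, a i = a 0
      · -- all shifts equal : exponents distinct, contradiction via top coefficient
        have einj : Function.Injective e := by
          intro i j hij
          apply hinj
          show (a i, e i) = (a j, e j)
          rw [hsh i, hsh j, hij]
        obtain ⟨i0, -, hmax⟩ := Finset.exists_max_image Finset.univ e ⟨0, Finset.mem_univ 0⟩
        have hco := congrArg (fun qq : ℂ[X] => qq.coeff (e i0)) hrel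
        simp only [Polynomial.finset_sum_coeff, Polynomial.coeff_C_mul,
          Polynomial.coeff_zero] at hco
        have hterm : ∀ i, c i * ((X - C (a i)) ^ (e i)).coeff (e i0)
            = if i = i0 then c i0 else 0 := by
          intro i
          rcases eq_or_ne i i0 with rfl | hne
          · rw [if_pos rfl]
            have hmon : ((X - C (a i)) ^ (e i)).Monic := (Polynomial.monic_X_sub_C (a i)).pow (e i)
            have : ((X - C (a i)) ^ (e i)).coeff (e i) = 1 := by
              have h8 := hmon.coeff_natDegree
              rwa [natDegree_X_sub_C_pow] at h8
            rw [this, mul_one]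
          · rw [if_neg hne]
            have hlt : e i < e i0 :=
              lt_of_le_of_ne (hmax i (Finset.mem_univ i)) fun hh => hne (einj hh)
            rw [Polynomial.coeff_eq_zero_of_natDegree_lt, mul_zero]
            rwa [natDegree_X_sub_C_pow]
        rw [Finset.sum_congr rfl fun i _ => hterm i] at hco
        rw [Finset.sum_ite_eq' Finset.univ i0 (fun _ => c i0)] at hco
        simp at hco
        exact hc0 i0 hco
      · -- two distinct shifts : valuation/degree counting contradiction
        push_neg at hsh
        obtain ⟨l, hl⟩ := hsh
        have hn0 : n ≠ 0 := by
          rintro rfl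
          have hl0 : l = 0 := Fin.ext (by omega)
          rw [hl0] at hl
          exact hl rfl
        have hch : (n + 1).choose 2 = n.choose 2 + n := by
          show Nat.choose (n + 1) 2 = _
          rw [Nat.choose_succ_succ, Nat.choose_one_right]
          ring
        set α : ℂ := a l with hα
        set E : Fin (n + 1) → ℕ := fun i => e i - (n - 1) with hE
        set R : Fin (n + 1) → ℂ[X] := fun i0 => (Matrix.of fun (m i' : Fin n) =>
            C (((e (i0.succAbove i')).descFactorial (m : ℕ) : ℂ)) *
              (X - C (a (i0.succAbove i'))) ^ ((n - 1) - (m : ℕ))).det with hR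
        have hfac : ∀ i0 : Fin (n + 1), subW n a e i0
            = (∏ i' : Fin n, (X - C (a (i0.succAbove i'))) ^ (E (i0.succAbove i'))) * R i0 := by
          intro i0
          have hmat : Wm n (a ∘ i0.succAbove) (e ∘ i0.succAbove)
              = Matrix.of fun (m i' : Fin n) =>
                  ((X - C (a (i0.succAbove i'))) ^ (E (i0.succAbove i'))) *
                  (C (((e (i0.succAbove i')).descFactorial (m : ℕ) : ℂ)) *
                    (X - C (a (i0.succAbove i'))) ^ ((n - 1) - (m : ℕ))) := by
            funext m i'
            show derivative^[(m : ℕ)] ((X - C (a (i0.succAbove i'))) ^ (e (i0.succAbove i'))) = _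
            rw [Polynomial.iterate_derivative_X_sub_pow]
            have hsplit : e (i0.succAbove i') - (m : ℕ)
                = E (i0.succAbove i') + ((n - 1) - (m : ℕ)) := by
              have h1 := hbig (i0.succAbove i')
              have h2 := m.isLt
              rw [hch] at h1
              simp only [hE]
              omega
            rw [hsplit, pow_add, nsmul_eq_mul]
            rw [← Polynomial.C_eq_natCast]
            simp only [Matrix.of_apply]
            ring
          show (Wm n (a ∘ i0.succAbove) (e ∘ i0.succAbove)).det = _
          rw [hmat, hR]
          exact Matrix.det_mul_row _ _
        have hRne : ∀ i0, R i0 ≠ 0 := by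
          intro i0 h0
          apply hsw i0
          rw [hfac i0, h0, mul_zero]
        have hdegR : ∀ i0, (R i0).natDegree ≤ n.choose 2 := by
          intro i0
          refine le_trans (natDegree_det_le _ (fun m => (n - 1) - (m : ℕ)) ?_) (le_of_eq (sum_rev n))
          intro m i'
          refine (Polynomial.natDegree_C_mul_le _ _).trans ?_
          exact (natDegree_X_sub_C_pow _ _).le
        -- equal root multiplicities of all subWronskians
        have hrm_pv : ∀ i, Polynomial.rootMultiplicity α (pvec n a e i)
            = Polynomial.rootMultiplicity α (subW n a e i) := by
          intro i
          unfold pvec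
          have hC : ((-1 : ℂ[X]) ^ (n + (i : ℕ))) = C ((-1 : ℂ) ^ (n + (i : ℕ))) := by
            rw [map_pow, map_neg, _root_.map_one]
          rw [hC, Polynomial.rootMultiplicity_mul (by
            rw [← hC]; exact hp0 i)]
          rw [Polynomial.rootMultiplicity_eq_zero (by simp [Polynomial.IsRoot])]
          exact zero_add _
        have hrm_eq : ∀ i, Polynomial.rootMultiplicity α (subW n a e i)
            = Polynomial.rootMultiplicity α (subW n a e 0) := by
          intro i
          rw [← hrm_pv i, ← hrm_pv 0]
          rw [hcp i, Polynomial.rootMultiplicity_mul (by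
            rw [← hcp i]; exact hp0 i)]
          rw [Polynomial.rootMultiplicity_eq_zero (by
            simp [Polynomial.IsRoot, hc0 i])]
          exact zero_add _
        set G : Fin (n + 1) → ℕ := fun i => if a i = α then E i else 0 with hG
        have hrmP : ∀ i0 : Fin (n + 1),
            Polynomial.rootMultiplicity α
              (∏ i' : Fin n, (X - C (a (i0.succAbove i'))) ^ (E (i0.succAbove i')))
              = ∑ i' : Fin n, G (i0.succAbove i') := by
          intro i0
          rw [rm_prod _ _ (fun i' _ => pow_ne_zero _ (Polynomial.X_sub_C_ne_zero _)) α]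
          refine Finset.sum_congr rfl fun i' _ => ?_
          rw [rm_pow]
        have hrm_fac : ∀ i0 : Fin (n + 1),
            Polynomial.rootMultiplicity α (subW n a e i0)
              = (∑ i' : Fin n, G (i0.succAbove i')) + Polynomial.rootMultiplicity α (R i0) := by
          intro i0
          rw [hfac i0, Polynomial.rootMultiplicity_mul (by rw [← hfac i0]; exact hsw i0), hrmP i0]
        have hT : ∀ i0 : Fin (n + 1), (∑ i, G i) = G i0 + ∑ i', G (i0.succAbove i') :=
          fun i0 => Fin.sum_univ_succAbove G i0
        have hGl : G l = E l := by simp [hG, hα]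
        have hG0 : G 0 = 0 := by
          have : a 0 ≠ α := fun hh => hl hh.symm
          simp [hG, this]
        have hrmRl : Polynomial.rootMultiplicity α (R l) ≤ n.choose 2 :=
          (rm_le_natDegree (hRne l) α).trans (hdegR l)
        have hEl_le : E l ≤ n.choose 2 := by
          have e1 := hT l
          have e2 := hT 0
          have e3 := hrm_fac l
          have e4 := hrm_fac 0
          have e5 := hrm_eq l
          omega
        have hEl_ge : n.choose 2 + 1 ≤ E l := by
          have h1 := hbig l
          rw [hch] at h1
          simp only [hE]
          omega
        omega

end

end Stmt8Aux

theorem stmt8 (s : ℕ) (a : Fin s → ℂ) (e : Fin s → ℕ)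
    (hdist : Function.Injective (fun i => (a i, e i)))
    (hbig : ∀ i, s * (s - 1) / 2 ≤ e i) :
    LinearIndependent ℂ (fun i : Fin s => (X - C (a i)) ^ (e i)) := by
  rw [Fintype.linearIndependent_iff]
  intro c hc
  by_contra hne
  push_neg at hne
  obtain ⟨i0, hi0⟩ := hne
  have hrel : ∑ i, C (c i) * ((X - C (a i)) ^ (e i)) = 0 := by
    rw [← hc]
    exact Finset.sum_congr rfl fun i _ => (Polynomial.smul_eq_C_mul (c i)).symm
  have hiter : ∀ (k : ℕ), derivative^[k] (∑ i, C (c i) * ((X - C (a i)) ^ (e i)))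
      = ∑ i, C (c i) * derivative^[k] ((X - C (a i)) ^ (e i)) := by
    intro k
    induction k with
    | zero => simp
    | succ k ih =>
        rw [Function.iterate_succ_apply', ih, Polynomial.derivative_sum]
        exact Finset.sum_congr rfl fun i _ => by
          rw [Polynomial.derivative_C_mul, Function.iterate_succ_apply']
  have hvm : Matrix.vecMul (fun i => C (c i)) ((Stmt8Aux.Wm s a e).transpose) = 0 := by
    funext j
    show ∑ i, C (c i) * (Stmt8Aux.Wm s a e).transpose i j = 0
    have : ∑ i, C (c i) * (Stmt8Aux.Wm s a e).transpose i j
        = derivative^[(j : ℕ)] (∑ i, C (c i) * ((X - C (a i)) ^ (e i))) := by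
      rw [hiter]
      rfl
    rw [this, hrel]
    induction (j : ℕ) with
    | zero => simp
    | succ k ih => rw [Function.iterate_succ_apply, Polynomial.derivative_zero]; simpa using ih
  have hv0 : (fun i => (C (c i) : ℂ[X])) ≠ 0 := by
    intro h0
    apply hi0
    have := congrFun h0 i0
    simpa using this
  have hdet0 : ((Stmt8Aux.Wm s a e).transpose).det = 0 :=
    Matrix.exists_vecMul_eq_zero_iff.mp ⟨_, hv0, hvm⟩
  rw [Matrix.det_transpose] at hdet0
  refine Stmt8Aux.key s a e hdist ?_ hdet0
  intro i
  rw [Nat.choose_two_right]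
  exact hbig i
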